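/- Define f : (0,1) → ℝ by f(x) = (1/2)(1 − x + √(1 + 2x − 3x²)). Then f is differentiable on (0,1) with f'(x) = (1/2)(−1 + (1 − 3x)/√(1 + 2x − 3x²)); moreover, for every x ∈ (0,1) with x ≠ 2/3, f'(x) = [f(x)(1 − f(x))(3x − 2)] / [x(1 − x)(3f(x) − 2)]. In particular, the vector field ẋ = x(1−x)(3y−2), ẏ = y(1−y)(3x−2) is everywhere tangent to the curve y = f(x). -/

import Mathlib

open Set

/-- The curve bounding the region of attraction of (Hare,Hare) in the
Stag Hunt game. -/
noncomputable def stagHuntCurve (x : ℝ) : ℝ :=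
  (1/2) * (1 - x + Real.sqrt (1 + 2 * x - 3 * x ^ 2))

lemma stagHunt_deriv {x : ℝ} (hx : x ∈ Ioo (0:ℝ) 1) :
    HasDerivAt stagHuntCurve
      ((1/2) * (-1 + (1 - 3*x) / Real.sqrt (1 + 2*x - 3*x^2))) x := by
  obtain ⟨h0, h1⟩ := hx
  have hq : (0:ℝ) < 1 + 2*x - 3*x^2 := by nlinarith
  have hs : Real.sqrt (1 + 2*x - 3*x^2) > 0 := Real.sqrt_pos.mpr hq
  have hpoly : HasDerivAt (fun t : ℝ => 1 + 2*t - 3*t^2) (2 - 6*x) x := by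
    have h := (((hasDerivAt_id x).const_mul 2).const_add 1).sub
      ((hasDerivAt_pow 2 x).const_mul 3)
    refine h.congr_deriv ?_
    ring
  have hsqrt := hpoly.sqrt (ne_of_gt hq)
  have h := (((hasDerivAt_id x).const_sub 1).add hsqrt).const_mul (1/2 : ℝ)
  refine h.congr_deriv ?_
  field_simp
  ring

/-- **Tangency of the replicator vector field to the stable manifold.**
The function `f(x) = (1/2)(1 - x + √(1 + 2x - 3x²))` is differentiable on `(0,1)`
with `f'(x) = (1/2)(-1 + (1-3x)/√(1 + 2x - 3x²))`; moreover for `x ≠ 2/3` its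
derivative equals `f(x)(1-f(x))(3x-2) / (x(1-x)(3f(x)-2))`, i.e. the replicator
vector field `ẋ = x(1-x)(3y-2)`, `ẏ = y(1-y)(3x-2)` is everywhere tangent to the
curve `y = f(x)`. -/
theorem stagHuntCurve_tangent :
    (∀ x ∈ Ioo (0:ℝ) 1,
      HasDerivAt stagHuntCurve
        ((1/2) * (-1 + (1 - 3*x) / Real.sqrt (1 + 2*x - 3*x^2))) x) ∧
    (∀ x ∈ Ioo (0:ℝ) 1, x ≠ 2/3 →
      HasDerivAt stagHuntCurve
        ((stagHuntCurve x * (1 - stagHuntCurve x) * (3*x - 2)) /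
          (x * (1 - x) * (3 * stagHuntCurve x - 2))) x) := by
  refine ⟨fun x hx => stagHunt_deriv hx, fun x hx hne => ?_⟩
  obtain ⟨h0, h1⟩ := hx
  have hq : (0:ℝ) < 1 + 2*x - 3*x^2 := by nlinarith
  set s := Real.sqrt (1 + 2*x - 3*x^2) with hs_def
  have hs : s > 0 := Real.sqrt_pos.mpr hq
  have hs2 : s ^ 2 = 1 + 2*x - 3*x^2 := Real.sq_sqrt hq.le
  have hf : stagHuntCurve x = (1/2) * (1 - x + s) := by
    unfold stagHuntCurve
    norm_num [hs_def]
  have hden : 3 * stagHuntCurve x - 2 ≠ 0 := by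
    rw [hf]
    intro h
    have hseq : s = (1 + 3*x) / 3 := by linarith
    have : s ^ 2 = ((1 + 3*x)/3)^2 := by rw [hseq]
    rw [hs2] at this
    have hx23 : x = 2/3 := by nlinarith [sq_nonneg (3*x - 2)]
    exact hne hx23
  have key : (stagHuntCurve x * (1 - stagHuntCurve x) * (3*x - 2)) /
      (x * (1 - x) * (3 * stagHuntCurve x - 2))
      = (1/2) * (-1 + (1 - 3*x) / s) := by
    rw [hf] at hden ⊢
    have hx0 : x ≠ 0 := ne_of_gt h0
    have hx1 : (1:ℝ) - x ≠ 0 := by linarith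
    have hprod : x * (1 - x) * (3 * ((1:ℝ)/2 * (1 - x + s)) - 2) ≠ 0 := by
      exact mul_ne_zero (mul_ne_zero hx0 hx1) hden
    rw [div_eq_iff hprod]
    field_simp
    linear_combination (-3*x*s + 2*s - x + 3*x^2) * hs2
  rw [key]
  exact stagHunt_deriv ⟨h0, h1⟩
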